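/- With f = 1/ψ' and K(x,y) = −(1/4)·[f(x+y)f'(x)f'(y) − f(x)f'(x+y)f'(y) − f(y)f'(x+y)f'(x)]/[f(x+y) − f(x) − f(y)]², one has K(x,y) → −1/2 as x, y → ∞ and K(x,y) → −1/4 as x → 0⁺, y → ∞. -/

import Mathlib

open Filter Set Topology

noncomputable def trigamma (x : ℝ) : ℝ := ∑' k : ℕ, 1 / (x + k) ^ 2

noncomputable def f (x : ℝ) : ℝ := 1 / trigamma x

noncomputable def K (x y : ℝ) : ℝ :=
  -(1 / 4) * (f (x + y) * deriv f x * deriv f y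
      - f x * deriv f (x + y) * deriv f y
      - f y * deriv f (x + y) * deriv f x)
    / (f (x + y) - f x - f y) ^ 2

noncomputable def S (p : ℕ) (x : ℝ) : ℝ := ∑' k : ℕ, 1 / (x + k) ^ p

example (x : ℝ) : trigamma x = S 2 x := rfl

lemma summable_S {x : ℝ} (hx : 0 < x) {p : ℕ} (hp : 2 ≤ p) :
    Summable (fun k : ℕ => 1 / (x + k) ^ p) := by
  have c := min x (1/2)
  set c := min x (1/2) with hc
  have hc0 : 0 < c := lt_min hx (by norm_num)
  have key : ∀ k : ℕ, 1 / (x + k) ^ p ≤ (1/c^p) * (1 / ((k:ℝ)+1) ^ 2) := by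
    intro k
    have hck : c * ((k:ℝ)+1) ≤ x + k := by
      rcases Nat.eq_zero_or_pos k with h | h
      · subst h; simp; nlinarith [min_le_left x (1/2), min_le_right x (1/2)]
      · have h1 : (1:ℝ) ≤ (k:ℝ) := by exact_mod_cast h
        nlinarith [min_le_right x (1/2), hx.le]
    have h1 : 0 < c * ((k:ℝ)+1) := by positivity
    have h2 : (c * ((k:ℝ)+1)) ^ p ≤ (x + k) ^ p := pow_le_pow_left₀ h1.le hck p
    have h3 : ((k:ℝ)+1) ^ 2 ≤ ((k:ℝ)+1) ^ p := by
      apply pow_le_pow_right₀ (by linarith [Nat.cast_nonneg (α := ℝ) k]) hp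
    have h4 : ((k:ℝ)+1)^2 * c^p ≤ (x + k)^p := by
      calc ((k:ℝ)+1)^2 * c^p ≤ ((k:ℝ)+1)^p * c^p := by
            apply mul_le_mul_of_nonneg_right h3 (by positivity)
        _ = (c * ((k:ℝ)+1))^p := by rw [mul_pow]; ring
        _ ≤ (x+k)^p := h2
    calc 1 / (x + (k:ℝ)) ^ p ≤ 1 / (((k:ℝ)+1)^2 * c^p) := by
          apply one_div_le_one_div_of_le (by positivity) h4
      _ = 1/c^p * (1 / ((k:ℝ)+1) ^ 2) := by field_simp
  apply Summable.of_nonneg_of_le (fun k => by positivity) key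
  apply Summable.mul_left
  have : Summable (fun k : ℕ => 1 / ((k:ℝ)) ^ 2) := by
    simpa using Real.summable_one_div_nat_pow.mpr (le_refl 2)
  have := (summable_nat_add_iff 1).mpr this
  simpa using this

lemma S_pos {x : ℝ} (hx : 0 < x) {p : ℕ} (hp : 2 ≤ p) : 0 < S p x := by
  have h0 : 0 < 1 / (x + (0:ℕ)) ^ p := by simp; positivity
  exact Summable.tsum_pos (summable_S hx hp) (fun k => by positivity) 0 h0

lemma S_le_S {x y : ℝ} (hx : 0 < x) (hxy : x ≤ y) {p : ℕ} (hp : 2 ≤ p) : S p y ≤ S p x := by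
  apply Summable.tsum_le_tsum _ (summable_S (lt_of_lt_of_le hx hxy) hp) (summable_S hx hp)
  intro k
  apply one_div_le_one_div_of_le (by positivity)
  apply pow_le_pow_left₀ (by positivity) (by linarith)

lemma S_rec {x : ℝ} (hx : 0 < x) {p : ℕ} (hp : 2 ≤ p) : S p x = 1 / x ^ p + S p (x + 1) := by
  rw [S, Summable.tsum_eq_zero_add (summable_S hx hp)]
  norm_num
  congr 1
  funext k
  push_cast
  ring_nf

lemma hasDerivAt_term {k : ℕ} {y : ℝ} (hy : 0 < y) (p : ℕ) (hp : 2 ≤ p) :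
    HasDerivAt (fun z : ℝ => 1 / (z + (k:ℝ)) ^ p) (-(p:ℝ) / (y + k) ^ (p+1)) y := by
  have hyk : 0 < y + (k:ℝ) := by have : (0:ℝ) ≤ k := Nat.cast_nonneg k; linarith
  have h1 : HasDerivAt (fun z : ℝ => (z + (k:ℝ)) ^ p) ((p:ℝ) * (y + k) ^ (p-1)) y := by
    have := ((hasDerivAt_id y).add_const (k:ℝ)).pow p
    simp at this
    exact this
  have h2 : HasDerivAt (fun z : ℝ => ((z + (k:ℝ)) ^ p)⁻¹) _ y := h1.inv (by positivity)
  simp only [one_div]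
  convert h2 using 1
  obtain ⟨q, rfl⟩ : ∃ q, p = q + 2 := ⟨p - 2, by omega⟩
  rw [show q + 2 - 1 = q + 1 by omega]
  field_simp
  ring

lemma hasDerivAt_S {x : ℝ} (hx : 0 < x) {p : ℕ} (hp : 2 ≤ p) :
    HasDerivAt (S p) (-(p:ℝ) * S (p+1) x) x := by
  have hsum : Summable (fun k : ℕ => (p:ℝ) / (x/2 + (k:ℝ)) ^ (p+1)) :=
    ((summable_S (half_pos hx) (by omega : 2 ≤ p+1)).mul_left (p:ℝ)).congr
      (fun k => by rw [mul_one_div])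
  have key : HasDerivAt (fun z => ∑' k : ℕ, 1 / (z + (k:ℝ)) ^ p)
      (∑' k : ℕ, -(p:ℝ) / (x + (k:ℝ)) ^ (p+1)) x := by
    refine hasDerivAt_tsum_of_isPreconnected hsum (isOpen_Ioi (a := x/2)) isPreconnected_Ioi
      (fun k y hy => hasDerivAt_term (lt_trans (half_pos hx) hy) p hp)
      (fun k y hy => ?_) (half_lt_self hx) (summable_S hx hp) (half_lt_self hx)
    have hy2 : x/2 < y := hy
    have hyk : (0:ℝ) < y + k := by have : (0:ℝ) ≤ k := Nat.cast_nonneg k; linarith [half_pos hx]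
    have hxk : (0:ℝ) < x/2 + k := by have : (0:ℝ) ≤ k := Nat.cast_nonneg k; linarith [half_pos hx]
    rw [Real.norm_eq_abs, abs_div, abs_neg, abs_of_nonneg (Nat.cast_nonneg p : (0:ℝ) ≤ p),
      abs_of_pos (by positivity : (0:ℝ) < (y + k) ^ (p+1))]
    apply div_le_div_of_nonneg_left (Nat.cast_nonneg p) (by positivity)
    exact pow_le_pow_left₀ hxk.le (by linarith) _
  have hval : ∑' k : ℕ, -(p:ℝ) / (x + (k:ℝ)) ^ (p+1) = -(p:ℝ) * S (p+1) x := by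
    rw [S, ← tsum_mul_left]
    exact tsum_congr fun k => by rw [mul_one_div, neg_div]
  rw [hval] at key
  exact key

lemma hasSum_telescope {g : ℕ → ℝ} (h0 : ∀ k, 0 ≤ g k - g (k+1))
    (hg : Filter.Tendsto g atTop (nhds 0)) : HasSum (fun k => g k - g (k+1)) (g 0) := by
  rw [hasSum_iff_tendsto_nat_of_nonneg h0]
  have : (fun n : ℕ => ∑ i ∈ Finset.range n, (g i - g (i+1))) = fun n => g 0 - g n := by
    funext n; exact Finset.sum_range_sub' g n
  rw [this]
  simpa using tendsto_const_nhds.sub hg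

lemma tsum_le_telescope {a g : ℕ → ℝ} (ha : Summable a) (h0 : ∀ k, 0 ≤ g k - g (k+1))
    (hg : Filter.Tendsto g atTop (nhds 0)) (hle : ∀ k, a k ≤ g k - g (k+1)) :
    ∑' k, a k ≤ g 0 := by
  have h := hasSum_telescope h0 hg
  calc ∑' k, a k ≤ ∑' k, (g k - g (k+1)) := Summable.tsum_le_tsum hle ha h.summable
    _ = g 0 := h.tsum_eq

lemma telescope_le_tsum {a g : ℕ → ℝ} (ha : Summable a) (h0 : ∀ k, 0 ≤ g k - g (k+1))
    (hg : Filter.Tendsto g atTop (nhds 0)) (hle : ∀ k, g k - g (k+1) ≤ a k) :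
    g 0 ≤ ∑' k, a k := by
  have h := hasSum_telescope h0 hg
  calc g 0 = ∑' k, (g k - g (k+1)) := h.tsum_eq.symm
    _ ≤ ∑' k, a k := Summable.tsum_le_tsum hle h.summable ha

lemma tendsto_shift_inv_pow (x c : ℝ) (q : ℕ) (hq : 1 ≤ q) :
    Filter.Tendsto (fun k : ℕ => c / (x + (k:ℝ) - 1/2) ^ q) atTop (nhds 0) := by
  have h1 : Filter.Tendsto (fun k : ℕ => x + (k:ℝ) - 1/2) atTop atTop := by
    apply Filter.tendsto_atTop_add_const_right
    apply Filter.tendsto_atTop_add_const_left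
    exact tendsto_natCast_atTop_atTop
  have h2 : Filter.Tendsto (fun k : ℕ => (x + (k:ℝ) - 1/2) ^ q) atTop atTop :=
    (tendsto_pow_atTop (by omega : q ≠ 0)).comp h1
  exact tendsto_const_nhds.div_atTop h2

-- generic nonnegativity of telescope terms for g k = c / (x+k-1/2)^q
lemma tele_nonneg {x c : ℝ} (hx : 1/2 < x) (hc : 0 ≤ c) (q : ℕ) (k : ℕ) :
    0 ≤ c / (x + (k:ℝ) - 1/2) ^ q - c / (x + ((k+1:ℕ):ℝ) - 1/2) ^ q := by
  have hk : (0:ℝ) ≤ k := Nat.cast_nonneg k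
  push_cast
  have h1 : (0:ℝ) < x + k - 1/2 := by linarith
  have h2 : x + (k:ℝ) - 1/2 ≤ x + (k:ℝ) + 1 - 1/2 := by linarith
  have h3 := div_le_div_of_nonneg_left hc (by positivity : (0:ℝ) < (x + (k:ℝ) - 1/2)^q)
    (pow_le_pow_left₀ h1.le h2 q)
  have e : x + ((k:ℝ) + 1) - 1/2 = x + (k:ℝ) + 1 - 1/2 := by ring
  rw [e]
  linarith

lemma S2_ub {x : ℝ} (hx : 1/2 < x) : S 2 x ≤ 1 / (x - 1/2) := by
  have key := tsum_le_telescope (a := fun k : ℕ => 1/(x+(k:ℝ))^2)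
    (g := fun k : ℕ => 1 / (x + (k:ℝ) - 1/2) ^ 1)
    (summable_S (by linarith) le_rfl)
    (fun k => tele_nonneg hx zero_le_one 1 k)
    (tendsto_shift_inv_pow x 1 1 le_rfl) ?_
  · simpa [S] using key
  · intro k
    have hk : (0:ℝ) ≤ k := Nat.cast_nonneg k
    push_cast
    simp only [pow_one]
    have ha : 1/2 < x + (k:ℝ) := by linarith
    have e1 : x + ((k:ℝ) + 1) - 1/2 = (x + k) + 1/2 := by ring
    rw [e1]
    have key : 1/(x+(k:ℝ)-1/2) - 1/((x+(k:ℝ))+1/2) = 1/((x+k)^2 - 1/4) := by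
      have h1 : x+(k:ℝ)-1/2 ≠ 0 := by linarith
      have h2 : (x+(k:ℝ))+1/2 ≠ 0 := by linarith
      have h3 : (x+(k:ℝ))^2 - 1/4 ≠ 0 := by nlinarith
      rw [div_sub_div _ _ h1 h2]
      congr 1 <;> ring
    rw [key]
    apply one_div_le_one_div_of_le (by nlinarith) (by nlinarith)

lemma S2_lb {x : ℝ} (hx : 3/2 ≤ x) :
    (1 - 1/(4*(x-1/2)^2)) / (x - 1/2) ≤ S 2 x := by
  set u := x - 1/2 with hu
  have hu1 : 1 ≤ u := by simp [hu]; linarith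
  have hc : 0 ≤ 1 - 1/(4*u^2) := by
    have : 1/(4*u^2) ≤ 1/4 := by
      apply one_div_le_one_div_of_le (by norm_num) (by nlinarith)
    linarith
  have key := telescope_le_tsum (a := fun k : ℕ => 1/(x+(k:ℝ))^2)
    (g := fun k : ℕ => (1 - 1/(4*u^2)) / (x + (k:ℝ) - 1/2) ^ 1)
    (summable_S (by linarith) le_rfl)
    (fun k => tele_nonneg (by linarith) hc 1 k)
    (tendsto_shift_inv_pow x _ 1 le_rfl) ?_
  · simpa [S, hu] using key
  · intro k
    have hk : (0:ℝ) ≤ k := Nat.cast_nonneg k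
    push_cast
    simp only [pow_one]
    have ha : 0 < x + (k:ℝ) - 1/2 := by linarith
    have e1 : x + ((k:ℝ) + 1) - 1/2 = (x + k) + 1/2 := by ring
    rw [e1, div_sub_div _ _ (by linarith : x+(k:ℝ)-1/2 ≠ 0) (by linarith : (x+(k:ℝ))+1/2 ≠ 0)]
    rw [div_le_div_iff₀ (by nlinarith) (by positivity)]
    have hau : u ≤ x + (k:ℝ) := by rw [hu]; linarith
    have h5 : u^2 ≤ (x+(k:ℝ))^2 := pow_le_pow_left₀ (by linarith) hau 2
    have h6 : (1/(4*u^2)) * u^2 = 1/4 := by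
      field_simp
    have h7 : (1:ℝ)/4 ≤ 1/(4*u^2) * (x+(k:ℝ))^2 := by
      rw [← h6]
      apply mul_le_mul_of_nonneg_left h5 (by positivity)
    nlinarith [h7]

lemma S3_ub {x : ℝ} (hx : 1/2 < x) : S 3 x ≤ (1/2) / (x - 1/2) ^ 2 := by
  have key := tsum_le_telescope (a := fun k : ℕ => 1/(x+(k:ℝ))^3)
    (g := fun k : ℕ => (1/2) / (x + (k:ℝ) - 1/2) ^ 2)
    (summable_S (by linarith) (by norm_num))
    (fun k => tele_nonneg hx (by norm_num) 2 k)
    (tendsto_shift_inv_pow x _ 2 (by norm_num)) ?_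
  · simpa [S] using key
  · intro k
    have hk : (0:ℝ) ≤ k := Nat.cast_nonneg k
    push_cast
    have ha : 1/2 < x + (k:ℝ) := by linarith
    have e1 : x + ((k:ℝ) + 1) - 1/2 = (x + k) + 1/2 := by ring
    have hapos : (0:ℝ) < x + (k:ℝ) - 1/2 := by linarith
    have hbpos : (0:ℝ) < (x + (k:ℝ)) + 1/2 := by linarith
    rw [e1, div_sub_div _ _ (ne_of_gt (pow_pos hapos 2)) (ne_of_gt (pow_pos hbpos 2)),
      div_le_div_iff₀ (by positivity) (mul_pos (pow_pos hapos 2) (pow_pos hbpos 2))]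
    nlinarith [sq_nonneg (x+(k:ℝ))]

lemma S3_lb {x : ℝ} (hx : 3/2 ≤ x) :
    (1 - 1/(x-1/2)^2) * ((1/2) / (x - 1/2) ^ 2) ≤ S 3 x := by
  set u := x - 1/2 with hu
  have hu1 : 1 ≤ u := by rw [hu]; linarith
  have hc : 0 ≤ (1 - 1/u^2) * (1/2) := by
    have : 1/u^2 ≤ 1/1 := by apply one_div_le_one_div_of_le (by norm_num) (by nlinarith)
    nlinarith
  have key := telescope_le_tsum (a := fun k : ℕ => 1/(x+(k:ℝ))^3)
    (g := fun k : ℕ => ((1 - 1/u^2) * (1/2)) / (x + (k:ℝ) - 1/2) ^ 2)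
    (summable_S (by linarith) (by norm_num))
    (fun k => tele_nonneg (by linarith) hc 2 k)
    (tendsto_shift_inv_pow x _ 2 (by norm_num)) ?_
  · rw [hu] at key ⊢
    have e2 : (1 - 1/(x-1/2)^2) * ((1/2) / (x - 1/2) ^ 2)
        = ((1 - 1/(x-1/2)^2) * (1/2)) / (x + (0:ℕ) - 1/2) ^ 2 := by
      push_cast; rw [add_zero, mul_div_assoc]
    rw [e2]
    exact key
  · intro k
    have hk : (0:ℝ) ≤ k := Nat.cast_nonneg k
    push_cast
    have ha : 0 < x + (k:ℝ) - 1/2 := by linarith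
    have hau : u ≤ x + (k:ℝ) := by rw [hu]; linarith
    have e1 : x + ((k:ℝ) + 1) - 1/2 = (x + k) + 1/2 := by ring
    have hapos : (0:ℝ) < x + (k:ℝ) - 1/2 := by linarith
    have hbpos : (0:ℝ) < (x + (k:ℝ)) + 1/2 := by linarith
    rw [e1, div_sub_div _ _ (ne_of_gt (pow_pos hapos 2)) (ne_of_gt (pow_pos hbpos 2)),
      div_le_div_iff₀ (mul_pos (pow_pos hapos 2) (pow_pos hbpos 2)) (by positivity)]
    have h5 : u^2 ≤ (x+(k:ℝ))^2 := pow_le_pow_left₀ (by linarith) hau 2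
    have h6 : (1/u^2) * u^2 = 1 := by field_simp
    have h7 : (1:ℝ) ≤ (1/u^2) * (x+(k:ℝ))^2 := by
      have := mul_le_mul_of_nonneg_left h5 (by positivity : (0:ℝ) ≤ 1/u^2)
      linarith [h6]
    have h8 : 0 ≤ ((1/u^2) * (x+(k:ℝ))^2 - 1) * (x+(k:ℝ))^2 :=
      mul_nonneg (by linarith) (by positivity)
    nlinarith [h8, sq_nonneg (x+(k:ℝ)), pow_pos (show (0:ℝ) < x+(k:ℝ) by linarith) 2]

lemma S4_ub {x : ℝ} (hx : 3/2 ≤ x) : S 4 x ≤ (1/3) / (x - 1/2) ^ 3 := by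
  have key := tsum_le_telescope (a := fun k : ℕ => 1/(x+(k:ℝ))^4)
    (g := fun k : ℕ => (1/3) / (x + (k:ℝ) - 1/2) ^ 3)
    (summable_S (by linarith) (by norm_num))
    (fun k => tele_nonneg (by linarith) (by norm_num) 3 k)
    (tendsto_shift_inv_pow x _ 3 (by norm_num)) ?_
  · simpa [S] using key
  · intro k
    have hk : (0:ℝ) ≤ k := Nat.cast_nonneg k
    push_cast
    have ha : 3/2 ≤ x + (k:ℝ) := by linarith
    have e1 : x + ((k:ℝ) + 1) - 1/2 = (x + k) + 1/2 := by ring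
    have hapos : (0:ℝ) < x + (k:ℝ) - 1/2 := by linarith
    have hbpos : (0:ℝ) < (x + (k:ℝ)) + 1/2 := by linarith
    rw [e1, div_sub_div _ _ (ne_of_gt (pow_pos hapos 3)) (ne_of_gt (pow_pos hbpos 3)),
      div_le_div_iff₀ (by positivity) (mul_pos (pow_pos hapos 3) (pow_pos hbpos 3))]
    have ha2 : (9/4:ℝ) ≤ (x+(k:ℝ))^2 := by nlinarith
    have h9 : (x+(k:ℝ))^2 * (9/4) ≤ (x+(k:ℝ))^2 * (x+(k:ℝ))^2 :=
      mul_le_mul_of_nonneg_left ha2 (by positivity)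
    nlinarith [ha2, h9, sq_nonneg (x+(k:ℝ)), sq_nonneg ((x+(k:ℝ))^2)]

lemma S4_lb {x : ℝ} (hx : 3/2 ≤ x) :
    (1 - 1/(x-1/2)^2) * ((1/3) / (x - 1/2) ^ 3) ≤ S 4 x := by
  set u := x - 1/2 with hu
  have hu1 : 1 ≤ u := by rw [hu]; linarith
  have hc : 0 ≤ (1 - 1/u^2) * (1/3) := by
    have : 1/u^2 ≤ 1/1 := by apply one_div_le_one_div_of_le (by norm_num) (by nlinarith)
    nlinarith
  have key := telescope_le_tsum (a := fun k : ℕ => 1/(x+(k:ℝ))^4)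
    (g := fun k : ℕ => ((1 - 1/u^2) * (1/3)) / (x + (k:ℝ) - 1/2) ^ 3)
    (summable_S (by linarith) (by norm_num))
    (fun k => tele_nonneg (by linarith) hc 3 k)
    (tendsto_shift_inv_pow x _ 3 (by norm_num)) ?_
  · rw [hu] at key ⊢
    have e2 : (1 - 1/(x-1/2)^2) * ((1/3) / (x - 1/2) ^ 3)
        = ((1 - 1/(x-1/2)^2) * (1/3)) / (x + (0:ℕ) - 1/2) ^ 3 := by
      push_cast; rw [add_zero, mul_div_assoc]
    rw [e2]
    exact key
  · intro k
    have hk : (0:ℝ) ≤ k := Nat.cast_nonneg k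
    push_cast
    have ha : 0 < x + (k:ℝ) - 1/2 := by linarith
    have hau : u ≤ x + (k:ℝ) := by rw [hu]; linarith
    have e1 : x + ((k:ℝ) + 1) - 1/2 = (x + k) + 1/2 := by ring
    have hapos : (0:ℝ) < x + (k:ℝ) - 1/2 := by linarith
    have hbpos : (0:ℝ) < (x + (k:ℝ)) + 1/2 := by linarith
    rw [e1, div_sub_div _ _ (ne_of_gt (pow_pos hapos 3)) (ne_of_gt (pow_pos hbpos 3)),
      div_le_div_iff₀ (mul_pos (pow_pos hapos 3) (pow_pos hbpos 3)) (by positivity)]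
    have h5 : u^2 ≤ (x+(k:ℝ))^2 := pow_le_pow_left₀ (by linarith) hau 2
    have h6 : (1/u^2) * u^2 = 1 := by field_simp
    have h7 : (1:ℝ) ≤ (1/u^2) * (x+(k:ℝ))^2 := by
      have := mul_le_mul_of_nonneg_left h5 (by positivity : (0:ℝ) ≤ 1/u^2)
      linarith [h6]
    have h8 : 0 ≤ ((1/u^2) * (x+(k:ℝ))^2 - 1) * ((x+(k:ℝ))^2 * (x+(k:ℝ))^2) :=
      mul_nonneg (by linarith) (by positivity)
    have h9 : 0 ≤ (1/u^2) * ((x+(k:ℝ))^2 * (x+(k:ℝ))^2) := by positivity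
    have ha2 : (9/4:ℝ) ≤ (x+(k:ℝ))^2 := by nlinarith
    nlinarith [h8, h9, ha2, sq_nonneg ((x+(k:ℝ))^2)]

lemma f_eq (x : ℝ) : f x = 1 / S 2 x := rfl

lemma S2_pos {x : ℝ} (hx : 0 < x) : 0 < S 2 x := S_pos hx le_rfl

lemma f_pos {x : ℝ} (hx : 0 < x) : 0 < f x := by
  rw [f_eq]; exact div_pos one_pos (S2_pos hx)

lemma Sw_bounds {x : ℝ} (hx : 3/2 ≤ x) : ∃ w : ℝ, w = 1/(x-1/2) ∧ 0 < w ∧ w ≤ 1 ∧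
    (1 - w^2/4)*w ≤ S 2 x ∧ S 2 x ≤ w ∧
    (1 - w^2)*(w^2/2) ≤ S 3 x ∧ S 3 x ≤ w^2/2 ∧
    (1 - w^2)*(w^3/3) ≤ S 4 x ∧ S 4 x ≤ w^3/3 := by
  have hne : x - 1/2 ≠ 0 := by intro h; rw [sub_eq_zero] at h; linarith [h.symm.le]
  have hpos : 0 < x - 1/2 := by linarith
  refine ⟨1/(x-1/2), rfl, by positivity, ?_, ?_, ?_, ?_, ?_, ?_, ?_⟩
  · rw [div_le_one hpos]; linarith
  · have h := S2_lb hx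
    have e : (1 - 1/(4*(x-1/2)^2))/(x-1/2) = (1 - (1/(x-1/2))^2/4)*(1/(x-1/2)) := by
      field_simp
    linarith [e ▸ h]
  · have h := S2_ub (show 1/2 < x by linarith); linarith
  · have h := S3_lb hx
    have e : (1 - 1/(x-1/2)^2) * ((1/2)/(x-1/2)^2) = (1 - (1/(x-1/2))^2)*((1/(x-1/2))^2/2) := by
      field_simp
    linarith [e ▸ h]
  · have h := S3_ub (show 1/2 < x by linarith)
    have e : (1/2)/(x-1/2)^2 = (1/(x-1/2))^2/2 := by field_simp
    linarith [e ▸ h]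
  · have h := S4_lb hx
    have e : (1 - 1/(x-1/2)^2) * ((1/3)/(x-1/2)^3) = (1 - (1/(x-1/2))^2)*((1/(x-1/2))^3/3) := by
      field_simp
    linarith [e ▸ h]
  · have h := S4_ub hx
    have e : (1/3)/(x-1/2)^3 = (1/(x-1/2))^3/3 := by field_simp
    linarith [e ▸ h]

lemma f_bounds {x : ℝ} (hx : 3/2 ≤ x) :
    x - 1/2 ≤ f x ∧ f x ≤ (x - 1/2) + (1/(x-1/2))/3 := by
  obtain ⟨w, hw, hw0, hw1, hA2, hA1, hB2, hB1, hC2, hC1⟩ := Sw_bounds hx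
  have hpos := S2_pos (show 0 < x by linarith)
  have hu0 : 0 < x - 1/2 := by linarith
  have hwu : w * (x - 1/2) = 1 := by
    rw [hw, one_div, inv_mul_cancel₀ (by linarith : x - 1/2 ≠ 0)]
  constructor
  · rw [f_eq, le_div_iff₀ hpos]
    have h1 : (x-1/2) * S 2 x ≤ (x-1/2) * w := mul_le_mul_of_nonneg_left hA1 hu0.le
    nlinarith [hwu]
  · rw [f_eq, div_le_iff₀ hpos]
    have hc : (0:ℝ) ≤ (x-1/2) + w/3 := by positivity
    have h1 : ((x-1/2) + w/3) * ((1 - w^2/4) * w) ≤ ((x-1/2) + w/3) * S 2 x :=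
      mul_le_mul_of_nonneg_left hA2 hc
    have key : (1:ℝ) ≤ ((x-1/2) + w/3) * ((1 - w^2/4) * w) := by
      have expand : ((x-1/2) + w/3) * ((1 - w^2/4) * w) =
          (w*(x-1/2)) + w^2/3 - (w^2/4)*(w*(x-1/2)) - w^4/12 := by ring
      rw [expand, hwu]
      nlinarith [sq_nonneg w, sq_nonneg (w^2), sq_nonneg (w - w^2)]
    have e : (1/(x-1/2))/3 = w/3 := by rw [hw]
    rw [e]
    linarith
  done

lemma f_le {x : ℝ} (hx : 3/2 ≤ x) : f x ≤ 2*(x - 1/2) := by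
  obtain ⟨-, h2⟩ := f_bounds hx
  have hu0 : (1:ℝ) ≤ x - 1/2 := by linarith
  have : (1/(x-1/2))/3 ≤ 1 := by
    rw [div_le_one (by norm_num : (0:ℝ) < 3)] at *
    have : 1/(x-1/2) ≤ 1 := by rw [div_le_one (by linarith)]; linarith
    linarith
  linarith

lemma hasDerivAt_f {x : ℝ} (hx : 0 < x) :
    HasDerivAt f (2 * S 3 x / (S 2 x)^2) x := by
  have h2 : HasDerivAt (S 2) (-(2:ℝ) * S 3 x) x := hasDerivAt_S hx le_rfl
  have hne : S 2 x ≠ 0 := ne_of_gt (S2_pos hx)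
  have h := (hasDerivAt_const x (1:ℝ)).div h2 hne
  have e : (0 * S 2 x - 1 * (-(2:ℝ) * S 3 x)) / (S 2 x)^2 = 2 * S 3 x / (S 2 x)^2 := by
    ring
  rw [e] at h
  exact h

lemma deriv_f {x : ℝ} (hx : 0 < x) : deriv f x = 2 * S 3 x / (S 2 x)^2 :=
  (hasDerivAt_f hx).deriv

lemma deriv_f_bounds {x : ℝ} (hx : 3/2 ≤ x) : |deriv f x - 1| ≤ (1/(x-1/2))^2 := by
  obtain ⟨w, hw, hw0, hw1, hA2, hA1, hB2, hB1, hC2, hC1⟩ := Sw_bounds hx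
  have hpos := S2_pos (show 0 < x by linarith)
  have hA2pos : 0 < (S 2 x)^2 := by positivity
  have hA1sq : (S 2 x)^2 ≤ w^2 := by nlinarith
  have hA2nn : 0 ≤ (1 - w^2/4)*w := by nlinarith
  have hA2sq : ((1 - w^2/4) * w)^2 ≤ (S 2 x)^2 := pow_le_pow_left₀ hA2nn hA2 2
  have hw2 : w^2 ≤ 1 := by nlinarith
  have h8 : (0:ℝ) ≤ 8 - 7*w^2 + w^4 := by nlinarith [sq_nonneg (w^2 - 1)]
  have h9 : (0:ℝ) ≤ w^4 * (8 - 7*w^2 + w^4) := mul_nonneg (by positivity) h8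
  have h_up : 2 * S 3 x / (S 2 x)^2 ≤ 1 + w^2 := by
    rw [div_le_iff₀ hA2pos]
    have h10 : (1 + w^2) * ((1 - w^2/4)*w)^2 ≤ (1 + w^2) * (S 2 x)^2 :=
      mul_le_mul_of_nonneg_left hA2sq (by positivity)
    nlinarith [hB1, h9]
  have h_lo : 1 - w^2 ≤ 2 * S 3 x / (S 2 x)^2 := by
    rw [le_div_iff₀ hA2pos]
    have h11 : (1 - w^2) * (S 2 x)^2 ≤ (1 - w^2) * w^2 :=
      mul_le_mul_of_nonneg_left hA1sq (by nlinarith)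
    nlinarith [hB2]
  rw [deriv_f (show 0 < x by linarith), ← hw, abs_le]
  constructor <;> [linarith; linarith]

noncomputable def Gv (x : ℝ) : ℝ := 2 * (4 * (S 3 x)^2 - 3 * S 4 x * S 2 x) / (S 2 x)^3

set_option maxHeartbeats 1000000 in
lemma hasDerivAt_h {x : ℝ} (hx : 0 < x) :
    HasDerivAt (fun t => 2 * S 3 t / (S 2 t)^2) (Gv x) x := by
  have h2 : HasDerivAt (S 2) (-(2:ℝ) * S 3 x) x := hasDerivAt_S hx le_rfl
  have h3 : HasDerivAt (S 3) (-(3:ℝ) * S 4 x) x := hasDerivAt_S hx (by norm_num)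
  have hne : S 2 x ≠ 0 := ne_of_gt (S2_pos hx)
  have hnum : HasDerivAt (fun t => 2 * S 3 t) (2 * (-(3:ℝ) * S 4 x)) x := h3.const_mul 2
  have hden : HasDerivAt (fun t => (S 2 t)^2) ((2:ℕ) * (S 2 x)^(2-1) * (-(2:ℝ) * S 3 x)) x :=
    h2.pow 2
  have h := hnum.div hden (pow_ne_zero 2 hne)
  have e : (2 * (-(3:ℝ) * S 4 x) * (S 2 x)^2 -
      2 * S 3 x * ((2:ℕ) * (S 2 x)^(2-1) * (-(2:ℝ) * S 3 x))) / ((S 2 x)^2)^2 = Gv x := by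
    rw [Gv]
    field_simp
    ring
  rw [e] at h
  exact h

set_option maxHeartbeats 1000000 in
lemma Gv_bound {x : ℝ} (hx : 3/2 ≤ x) : |Gv x| ≤ 10 * (1/(x-1/2))^3 := by
  obtain ⟨w, hw, hw0, hw1, hA2, hA1, hB2, hB1, hC2, hC1⟩ := Sw_bounds hx
  have hpos := S2_pos (show 0 < x by linarith)
  have hw2 : w^2 ≤ 1 := by nlinarith
  have hA2nn : 0 ≤ (1 - w^2/4)*w := by nlinarith
  have hB2' : 0 ≤ S 3 x := by nlinarith
  have hC2' : 0 ≤ S 4 x := by nlinarith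
  -- numerator bound : |4*B^2 - 3*C*A| ≤ 2*w^6
  have hnum : |4 * (S 3 x)^2 - 3 * S 4 x * S 2 x| ≤ 2 * w^6 := by
    rw [abs_le]
    constructor
    · -- lower: 4B² ≥ (1-w²)²w⁴ ;  3CA ≤ 3·(w³/3)·w = w⁴
      have h1 : ((1-w^2)*(w^2/2))^2 ≤ (S 3 x)^2 := pow_le_pow_left₀ (by nlinarith) hB2 2
      have h2 : 3 * S 4 x * S 2 x ≤ 3 * (w^3/3) * w := by
        have := mul_le_mul hC1 hA1 hpos.le (by positivity : (0:ℝ) ≤ w^3/3)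
        nlinarith
      nlinarith [pow_nonneg hw0.le 8]
    · -- upper: 4B² ≤ w⁴ ; 3CA ≥ 3·(1-w²)(w³/3)·(1-w²/4)w
      have h1 : (S 3 x)^2 ≤ (w^2/2)^2 := pow_le_pow_left₀ hB2' hB1 2
      have h2 : ((1-w^2)*(w^3/3)) * ((1 - w^2/4)*w) ≤ S 4 x * S 2 x := by
        apply mul_le_mul hC2 hA2 hA2nn hC2'
      nlinarith [mul_nonneg (pow_nonneg hw0.le 6) (sub_nonneg.mpr hw2),
        pow_nonneg hw0.le 8, pow_nonneg hw0.le 6]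
  have hA3 : (27/64) * w^3 ≤ (S 2 x)^3 := by
    have h0 : (3/4)*w ≤ (1 - w^2/4)*w := by nlinarith
    have h1 : ((3/4)*w)^3 ≤ (S 2 x)^3 :=
      le_trans (pow_le_pow_left₀ (by positivity) h0 3) (pow_le_pow_left₀ hA2nn hA2 3)
    nlinarith [h1]
  have hA3pos : 0 < (S 2 x)^3 := by positivity
  have habs : |Gv x| = 2 * |4 * (S 3 x)^2 - 3 * S 4 x * S 2 x| / (S 2 x)^3 := by
    rw [Gv, abs_div, abs_of_pos hA3pos, abs_mul]
    norm_num
  rw [habs, ← hw]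
  calc 2 * |4 * (S 3 x)^2 - 3 * S 4 x * S 2 x| / (S 2 x)^3
      ≤ 2 * (2 * w^6) / ((27/64) * w^3) := by
        apply div_le_div₀ (by positivity) (by linarith) (by positivity) hA3
    _ ≤ 10 * w^3 := by
        rw [div_le_iff₀ (by positivity)]
        nlinarith [pow_pos hw0 6, pow_pos hw0 3]

lemma f_diff_bound {a b : ℝ} (ha : 3/2 ≤ a) (hab : a < b) :
    |f b - f a - (b - a)| ≤ (b - a) * (1/(a-1/2))^2 := by
  have hcont : ContinuousOn f (Icc a b) := fun t ht =>
    ((hasDerivAt_f (show 0 < t by cases ht with | intro h1 h2 => linarith)).continuousAt).continuousWithinAt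
  have hder : ∀ t ∈ Ioo a b, HasDerivAt f (2 * S 3 t / (S 2 t)^2) t := fun t ht =>
    hasDerivAt_f (by cases ht with | intro h1 h2 => linarith)
  obtain ⟨ξ, hξ, hslope⟩ := exists_hasDerivAt_eq_slope f _ hab hcont hder
  have hξa : a < ξ := hξ.1
  have hξ32 : 3/2 ≤ ξ := by linarith
  have hderξ : deriv f ξ = 2 * S 3 ξ / (S 2 ξ)^2 := deriv_f (by linarith)
  have hdb := deriv_f_bounds hξ32
  rw [hderξ, hslope] at hdb
  have hmon : (1/(ξ-1/2))^2 ≤ (1/(a-1/2))^2 := by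
    have h1 : 1/(ξ-1/2) ≤ 1/(a-1/2) := one_div_le_one_div_of_le (by linarith) (by linarith)
    have h2 : 0 < 1/(ξ-1/2) := div_pos one_pos (by linarith)
    nlinarith
  have hba : 0 < b - a := by linarith
  have e : f b - f a - (b - a) = ((f b - f a)/(b-a) - 1) * (b - a) := by
    field_simp
  rw [e, abs_mul, abs_of_pos hba]
  have := mul_le_mul_of_nonneg_right (le_trans hdb hmon) hba.le
  linarith

lemma derivf_diff_bound {a b : ℝ} (ha : 3/2 ≤ a) (hab : a < b) :
    |deriv f b - deriv f a| ≤ (b - a) * (10 * (1/(a-1/2))^3) := by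
  have hcont : ContinuousOn (fun t => 2 * S 3 t / (S 2 t)^2) (Icc a b) := fun t ht =>
    ((hasDerivAt_h (show 0 < t by cases ht with | intro h1 h2 => linarith)).continuousAt).continuousWithinAt
  have hder : ∀ t ∈ Ioo a b, HasDerivAt (fun t => 2 * S 3 t / (S 2 t)^2) (Gv t) t := fun t ht =>
    hasDerivAt_h (by cases ht with | intro h1 h2 => linarith)
  obtain ⟨ξ, hξ, hslope⟩ := exists_hasDerivAt_eq_slope _ _ hab hcont hder
  have hξa : a < ξ := hξ.1
  have hgb := Gv_bound (show 3/2 ≤ ξ by linarith)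
  rw [hslope] at hgb
  have hmon : 10 * (1/(ξ-1/2))^3 ≤ 10 * (1/(a-1/2))^3 := by
    have h1 : 1/(ξ-1/2) ≤ 1/(a-1/2) := one_div_le_one_div_of_le (by linarith) (by linarith)
    have h2 : 0 < 1/(ξ-1/2) := div_pos one_pos (by linarith)
    have h3 := pow_le_pow_left₀ h2.le h1 3
    linarith
  have hba : 0 < b - a := by linarith
  have ederb : deriv f b = 2 * S 3 b / (S 2 b)^2 := deriv_f (by linarith)
  have edera : deriv f a = 2 * S 3 a / (S 2 a)^2 := deriv_f (by linarith)
  have e : deriv f b - deriv f a =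
      ((2 * S 3 b / (S 2 b)^2 - 2 * S 3 a / (S 2 a)^2)/(b-a)) * (b - a) := by
    rw [ederb, edera]; field_simp
  rw [e, abs_mul, abs_of_pos hba]
  have := mul_le_mul_of_nonneg_right (le_trans hgb hmon) hba.le
  linarith

lemma S2_one : S 2 1 ≤ 2 := by
  have := S2_ub (show (1:ℝ)/2 < 1 by norm_num)
  norm_num at this
  linarith

lemma S3_one : S 3 1 ≤ 2 := by
  have := S3_ub (show (1:ℝ)/2 < 1 by norm_num)
  norm_num at this
  linarith

lemma f_small {x : ℝ} (hx0 : 0 < x) (hx : x ≤ 1/2) :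
    x^2*(1 - 2*x^2) ≤ f x ∧ f x ≤ x^2 := by
  have hrec := S_rec hx0 (le_refl 2)
  have h1 : S 2 (x+1) ≤ 2 := le_trans (S_le_S one_pos (by linarith) le_rfl) S2_one
  have h2 : 0 < S 2 (x+1) := S2_pos (by linarith)
  have hxlb : 1/x^2 ≤ S 2 x := by rw [hrec]; linarith
  have hxub : S 2 x ≤ 1/x^2 + 2 := by rw [hrec]; linarith
  have hpos := S2_pos hx0
  constructor
  · rw [f_eq, le_div_iff₀ hpos]
    have hx2 : x^2 ≤ 1/4 := by nlinarith
    have hnn : (0:ℝ) ≤ x^2*(1-2*x^2) := by nlinarith [sq_nonneg x]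
    have := mul_le_mul_of_nonneg_left hxub hnn
    have hinv : x^2 * (1/x^2) = 1 := by field_simp
    nlinarith
  · rw [f_eq, div_le_iff₀ hpos]
    have := mul_le_mul_of_nonneg_left hxlb (sq_nonneg x)
    have hinv : x^2 * (1/x^2) = 1 := by field_simp
    nlinarith

lemma derivf_small {x : ℝ} (hx0 : 0 < x) (hx : x ≤ 1/2) :
    2*x*(1-4*x^2) ≤ deriv f x ∧ deriv f x ≤ 2*x*(1+2*x^3) := by
  have hrec2 := S_rec hx0 (le_refl 2)
  have hrec3 := S_rec (p := 3) hx0 (by norm_num)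
  have h21 : S 2 (x+1) ≤ 2 := le_trans (S_le_S one_pos (by linarith) le_rfl) S2_one
  have h22 : 0 < S 2 (x+1) := S2_pos (by linarith)
  have h31 : S 3 (x+1) ≤ 2 := le_trans (S_le_S one_pos (by linarith) (by norm_num)) S3_one
  have h32 : 0 < S 3 (x+1) := S_pos (by linarith) (by norm_num)
  have hS2lb : 1/x^2 ≤ S 2 x := by rw [hrec2]; linarith
  have hS2ub : S 2 x ≤ 1/x^2 + 2 := by rw [hrec2]; linarith
  have hS3lb : 1/x^3 ≤ S 3 x := by rw [hrec3]; linarith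
  have hS3ub : S 3 x ≤ 1/x^3 + 2 := by rw [hrec3]; linarith
  have hpos := S2_pos hx0
  have hS3pos : 0 < S 3 x := S_pos hx0 (by norm_num)
  rw [deriv_f hx0]
  have hS2sq_lb : (1/x^2)^2 ≤ (S 2 x)^2 := pow_le_pow_left₀ (by positivity) hS2lb 2
  have hS2sq_ub : (S 2 x)^2 ≤ (1/x^2 + 2)^2 := pow_le_pow_left₀ hpos.le hS2ub 2
  constructor
  · have step : 2*(1/x^3)/((1/x^2+2)^2) ≤ 2 * S 3 x / (S 2 x)^2 :=
      div_le_div₀ (by positivity) (by linarith) (by positivity) hS2sq_ub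
    have e : 2*(1/x^3)/((1/x^2+2)^2) = 2*x/((1+2*x^2)^2) := by
      field_simp
    rw [e] at step
    have final : 2*x*(1-4*x^2) ≤ 2*x/((1+2*x^2)^2) := by
      rw [le_div_iff₀ (by positivity)]
      nlinarith [pow_pos hx0 5, pow_pos hx0 7, pow_pos hx0 3]
    linarith
  · have step : 2 * S 3 x / (S 2 x)^2 ≤ 2*(1/x^3+2)/((1/x^2)^2) :=
      div_le_div₀ (by positivity) (by linarith) (by positivity) hS2sq_lb
    have e : 2*(1/x^3+2)/((1/x^2)^2) = 2*x*(1+2*x^3) := by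
      field_simp
    rw [e] at step
    exact step

lemma tendsto_of_abs_le {α : Type*} {l : Filter α} {g h : α → ℝ} {c : ℝ}
    (hg : ∀ᶠ t in l, |g t - c| ≤ h t) (hh : Filter.Tendsto h l (nhds 0)) :
    Filter.Tendsto g l (nhds c) := by
  rw [← tendsto_sub_nhds_zero_iff]
  apply squeeze_zero_norm' _ hh
  simpa using hg

lemma limit1 : Filter.Tendsto (fun p : ℝ × ℝ => K p.1 p.2)
    (Filter.atTop ×ˢ Filter.atTop) (nhds (-(1 / 2))) := by
  set l : Filter (ℝ × ℝ) := Filter.atTop ×ˢ Filter.atTop with hl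
  have hev1 : ∀ᶠ p : ℝ × ℝ in l, 3/2 ≤ p.1 :=
    Filter.Eventually.prod_inl (Filter.eventually_ge_atTop (3/2)) _
  have hev2 : ∀ᶠ p : ℝ × ℝ in l, 3/2 ≤ p.2 :=
    Filter.Eventually.prod_inr (Filter.eventually_ge_atTop (3/2)) _
  -- auxiliary tendstos
  have hsub1 : Filter.Tendsto (fun p : ℝ × ℝ => p.1 - 1/2) l Filter.atTop :=
    (Filter.tendsto_atTop_add_const_right _ (-(1/2)) Filter.tendsto_fst).congr
      (fun p => by ring)
  have hsub2 : Filter.Tendsto (fun p : ℝ × ℝ => p.2 - 1/2) l Filter.atTop :=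
    (Filter.tendsto_atTop_add_const_right _ (-(1/2)) Filter.tendsto_snd).congr
      (fun p => by ring)
  have hz1 : Filter.Tendsto (fun p : ℝ × ℝ => 1/(p.1 - 1/2)) l (nhds 0) :=
    tendsto_const_nhds.div_atTop hsub1
  have hz2 : Filter.Tendsto (fun p : ℝ × ℝ => 1/(p.2 - 1/2)) l (nhds 0) :=
    tendsto_const_nhds.div_atTop hsub2
  have hz1sq : Filter.Tendsto (fun p : ℝ × ℝ => (1/(p.1 - 1/2))^2) l (nhds 0) := by
    have := hz1.pow 2; simpa using this
  have hz2sq : Filter.Tendsto (fun p : ℝ × ℝ => (1/(p.2 - 1/2))^2) l (nhds 0) := by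
    have := hz2.pow 2; simpa using this
  -- component A
  have hA : Filter.Tendsto (fun p : ℝ × ℝ => f (p.1+p.2) - f p.1 - f p.2) l (nhds (1/2)) := by
    apply tendsto_of_abs_le (h := fun p : ℝ × ℝ => (1/(p.1-1/2))/3 + (1/(p.2-1/2))/3)
    · filter_upwards [hev1, hev2] with p h1 h2
      obtain ⟨la, ua⟩ := f_bounds h1
      obtain ⟨lb, ub⟩ := f_bounds h2
      obtain ⟨lc, uc⟩ := f_bounds (show 3/2 ≤ p.1 + p.2 by linarith)
      have hmon : 1/(p.1+p.2-1/2) ≤ 1/(p.1-1/2) :=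
        one_div_le_one_div_of_le (by linarith) (by linarith)
      have hnn2 : 0 ≤ 1/(p.2-1/2) := le_of_lt (div_pos one_pos (by linarith))
      rw [abs_le]
      constructor <;> [linarith; linarith]
    · have := (hz1.div_const 3).add (hz2.div_const 3)
      simpa using this
  -- components Bx, By
  have hBx : Filter.Tendsto (fun p : ℝ × ℝ => deriv f p.1) l (nhds 1) := by
    apply tendsto_of_abs_le (h := fun p : ℝ × ℝ => (1/(p.1-1/2))^2) _ hz1sq
    filter_upwards [hev1] with p h1
    exact deriv_f_bounds h1
  have hBy : Filter.Tendsto (fun p : ℝ × ℝ => deriv f p.2) l (nhds 1) := by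
    apply tendsto_of_abs_le (h := fun p : ℝ × ℝ => (1/(p.2-1/2))^2) _ hz2sq
    filter_upwards [hev2] with p h2
    exact deriv_f_bounds h2
  -- components Px, Py
  have keyP : ∀ x y : ℝ, 3/2 ≤ x → 3/2 ≤ y →
      |f x * (deriv f x - deriv f (x+y))| ≤ 4/(x-1/2) := by
    intro x y h1 h2
    have hu0 : 0 < x - 1/2 := by linarith
    have hfnn : 0 ≤ f x := (f_pos (show 0 < x by linarith)).le
    have hd1 := deriv_f_bounds h1
    have hd12 := deriv_f_bounds (show 3/2 ≤ x + y by linarith)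
    have hmon : (1/(x+y-1/2))^2 ≤ (1/(x-1/2))^2 := by
      have ha : 1/(x+y-1/2) ≤ 1/(x-1/2) := one_div_le_one_div_of_le (by linarith) (by linarith)
      have hb : 0 < 1/(x+y-1/2) := div_pos one_pos (by linarith)
      nlinarith
    have htri : |deriv f x - deriv f (x+y)| ≤ 2 * (1/(x-1/2))^2 := by
      have := abs_sub_le (deriv f x) 1 (deriv f (x+y))
      rw [abs_sub_comm 1 (deriv f (x+y))] at this
      linarith
    rw [abs_mul, abs_of_nonneg hfnn]
    calc f x * |deriv f x - deriv f (x+y)| ≤ (2*(x-1/2)) * (2 * (1/(x-1/2))^2) :=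
          mul_le_mul (f_le h1) htri (abs_nonneg _) (by positivity)
      _ = 4/(x-1/2) := by
          have hne : x - 1/2 ≠ 0 := ne_of_gt hu0
          rw [div_pow, one_pow, eq_div_iff hne,
            show (2*(x-1/2))*(2*(1/(x-1/2)^2))*(x-1/2) = 4*((x-1/2)^2/(x-1/2)^2) from by ring,
            div_self (pow_ne_zero 2 hne), mul_one]
  have hPx : Filter.Tendsto (fun p : ℝ × ℝ => f p.1 * (deriv f p.1 - deriv f (p.1+p.2)))
      l (nhds 0) := by
    apply tendsto_of_abs_le (h := fun p : ℝ × ℝ => 4/(p.1-1/2))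
    · filter_upwards [hev1, hev2] with p h1 h2
      simpa using keyP p.1 p.2 h1 h2
    · have : Filter.Tendsto (fun p : ℝ × ℝ => (4:ℝ) * (1/(p.1-1/2))) l (nhds (4 * 0)) :=
        hz1.const_mul 4
      simpa [div_eq_mul_inv] using this
  have hPy : Filter.Tendsto (fun p : ℝ × ℝ => f p.2 * (deriv f p.2 - deriv f (p.1+p.2)))
      l (nhds 0) := by
    apply tendsto_of_abs_le (h := fun p : ℝ × ℝ => 4/(p.2-1/2))
    · filter_upwards [hev1, hev2] with p h1 h2
      have := keyP p.2 p.1 h2 h1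
      rw [show p.2 + p.1 = p.1 + p.2 by ring] at this
      simpa using this
    · have : Filter.Tendsto (fun p : ℝ × ℝ => (4:ℝ) * (1/(p.2-1/2))) l (nhds (4 * 0)) :=
        hz2.const_mul 4
      simpa [div_eq_mul_inv] using this
  -- combine
  have hnum : Filter.Tendsto (fun p : ℝ × ℝ =>
      -(1/4) * ((f (p.1+p.2) - f p.1 - f p.2) * deriv f p.1 * deriv f p.2
        + f p.1 * (deriv f p.1 - deriv f (p.1+p.2)) * deriv f p.2
        + f p.2 * (deriv f p.2 - deriv f (p.1+p.2)) * deriv f p.1))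
      l (nhds (-(1/4) * ((1/2) * 1 * 1 + 0 * 1 + 0 * 1))) :=
    (((hA.mul hBx).mul hBy).add ((hPx.mul hBy)) |>.add ((hPy.mul hBx))).const_mul (-(1/4))
  have hden : Filter.Tendsto (fun p : ℝ × ℝ => (f (p.1+p.2) - f p.1 - f p.2)^2)
      l (nhds ((1/2)^2)) := hA.pow 2
  have hdiv := hnum.div hden (by norm_num)
  have hval : (-(1/4) * ((1/2) * 1 * 1 + 0 * 1 + 0 * 1)) / ((1/2:ℝ)^2) = -(1/2) := by norm_num
  rw [hval] at hdiv
  apply hdiv.congr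
  intro p
  simp only [Pi.div_apply, K]
  congr 1
  ring

lemma div_sq_cancel' (a D x : ℝ) (hx : x ≠ 0) : (a/x^2) / (D/x)^2 = a / D^2 := by
  rcases eq_or_ne D 0 with h | h
  · simp [h]
  · field_simp

lemma limit2 : Filter.Tendsto (fun p : ℝ × ℝ => K p.1 p.2)
    ((nhdsWithin 0 (Set.Ioi 0)) ×ˢ Filter.atTop) (nhds (-(1 / 4))) := by
  set l : Filter (ℝ × ℝ) := (nhdsWithin 0 (Set.Ioi 0)) ×ˢ Filter.atTop with hl
  have hev0 : ∀ᶠ p : ℝ × ℝ in l, 0 < p.1 := by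
    apply Filter.Eventually.prod_inl (p := fun x : ℝ => 0 < x)
    filter_upwards [self_mem_nhdsWithin] with x hx
    exact hx
  have hevhalf : ∀ᶠ p : ℝ × ℝ in l, p.1 ≤ 1/2 := by
    apply Filter.Eventually.prod_inl (p := fun x : ℝ => x ≤ 1/2)
    have h1 : ∀ᶠ x : ℝ in nhds 0, x ≤ 1/2 := by
      filter_upwards [Iio_mem_nhds (show (0:ℝ) < 1/2 by norm_num)] with x hx
      exact le_of_lt hx
    exact nhdsWithin_le_nhds h1
  have hev2 : ∀ᶠ p : ℝ × ℝ in l, 3/2 ≤ p.2 :=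
    Filter.Eventually.prod_inr (Filter.eventually_ge_atTop (3/2)) _
  have hx0 : Filter.Tendsto (fun p : ℝ × ℝ => p.1) l (nhds 0) :=
    Filter.tendsto_fst.mono_right nhdsWithin_le_nhds
  have hsub2 : Filter.Tendsto (fun p : ℝ × ℝ => p.2 - 1/2) l Filter.atTop :=
    (Filter.tendsto_atTop_add_const_right _ (-(1/2)) Filter.tendsto_snd).congr
      (fun p => by ring)
  have hz2 : Filter.Tendsto (fun p : ℝ × ℝ => 1/(p.2 - 1/2)) l (nhds 0) :=
    tendsto_const_nhds.div_atTop hsub2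
  have hz2sq : Filter.Tendsto (fun p : ℝ × ℝ => (1/(p.2 - 1/2))^2) l (nhds 0) := by
    have := hz2.pow 2; simpa using this
  have hx2 : Filter.Tendsto (fun p : ℝ × ℝ => p.1^2) l (nhds 0) := by
    have := hx0.pow 2; simpa using this
  -- W
  have hW : Filter.Tendsto (fun p : ℝ × ℝ => (f (p.1+p.2) - f p.2)/p.1) l (nhds 1) := by
    apply tendsto_of_abs_le (h := fun p : ℝ × ℝ => (1/(p.2-1/2))^2) _ hz2sq
    filter_upwards [hev0, hev2] with p hx hy
    have hd := f_diff_bound hy (show p.2 < p.1+p.2 by linarith)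
    rw [show p.1+p.2-p.2 = p.1 from by ring] at hd
    have e : (f (p.1+p.2) - f p.2)/p.1 - 1 = (f (p.1+p.2) - f p.2 - p.1)/p.1 := by
      field_simp
    rw [e, abs_div, abs_of_pos hx, div_le_iff₀ hx]
    linarith
  -- V
  have hV : Filter.Tendsto (fun p : ℝ × ℝ =>
      f p.2 * (deriv f p.2 - deriv f (p.1+p.2)) / p.1) l (nhds 0) := by
    apply tendsto_of_abs_le (h := fun p : ℝ × ℝ => 20*(1/(p.2-1/2))^2)
    · filter_upwards [hev0, hev2] with p hx hy
      have hdd := derivf_diff_bound hy (show p.2 < p.1+p.2 by linarith)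
      rw [show p.1+p.2-p.2 = p.1 from by ring] at hdd
      have hne : p.2 - 1/2 ≠ 0 := by intro h; rw [sub_eq_zero] at h; linarith [h.symm.le]
      rw [sub_zero, abs_div, abs_of_pos hx, div_le_iff₀ hx, abs_mul,
        abs_of_nonneg (f_pos (show 0 < p.2 by linarith)).le, abs_sub_comm]
      calc f p.2 * |deriv f (p.1+p.2) - deriv f p.2|
          ≤ (2*(p.2-1/2)) * (p.1*(10*(1/(p.2-1/2))^3)) :=
            mul_le_mul (f_le hy) hdd (abs_nonneg _) (by linarith)
        _ = 20*(1/(p.2-1/2))^2 * p.1 := by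
            have hc : (1/(p.2-1/2)) * (p.2-1/2) = 1 := one_div_mul_cancel hne
            linear_combination (20*p.1*(1/(p.2-1/2))^2) * hc
    · have : Filter.Tendsto (fun p : ℝ × ℝ => (20:ℝ)*(1/(p.2-1/2))^2) l (nhds (20*0)) :=
        hz2sq.const_mul 20
      simpa using this
  -- R
  have hR : Filter.Tendsto (fun p : ℝ × ℝ => deriv f p.1 / p.1) l (nhds 2) := by
    apply tendsto_of_abs_le (h := fun p : ℝ × ℝ => 8*p.1^2)
    · filter_upwards [hev0, hevhalf] with p hx hh
      obtain ⟨hlo, hup⟩ := derivf_small hx hh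
      rw [abs_le]
      constructor
      · have h1 : (2-8*p.1^2)*p.1 ≤ deriv f p.1 := by nlinarith [pow_pos hx 3]
        have := (le_div_iff₀ hx).mpr h1
        linarith
      · have h1 : deriv f p.1 ≤ (2+8*p.1^2)*p.1 := by nlinarith [pow_pos hx 3]
        have := (div_le_iff₀ hx).mpr h1
        linarith
    · have : Filter.Tendsto (fun p : ℝ × ℝ => (8:ℝ)*p.1^2) l (nhds (8*0)) :=
        hx2.const_mul 8
      simpa using this
  -- Q
  have hQ : Filter.Tendsto (fun p : ℝ × ℝ => f p.1 / p.1^2) l (nhds 1) := by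
    apply tendsto_of_abs_le (h := fun p : ℝ × ℝ => 2*p.1^2)
    · filter_upwards [hev0, hevhalf] with p hx hh
      obtain ⟨hlo, hup⟩ := f_small hx hh
      have hx2p : 0 < p.1^2 := by positivity
      rw [abs_le]
      constructor
      · have h1 : (1-2*p.1^2)*p.1^2 ≤ f p.1 := by nlinarith
        have := (le_div_iff₀ hx2p).mpr h1
        linarith
      · have h1 : f p.1 ≤ (1+2*p.1^2)*p.1^2 := by nlinarith
        have := (div_le_iff₀ hx2p).mpr h1
        linarith
    · have : Filter.Tendsto (fun p : ℝ × ℝ => (2:ℝ)*p.1^2) l (nhds (2*0)) :=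
        hx2.const_mul 2
      simpa using this
  -- By, Bxy
  have hBy : Filter.Tendsto (fun p : ℝ × ℝ => deriv f p.2) l (nhds 1) := by
    apply tendsto_of_abs_le (h := fun p : ℝ × ℝ => (1/(p.2-1/2))^2) _ hz2sq
    filter_upwards [hev2] with p h2
    exact deriv_f_bounds h2
  have hBxy : Filter.Tendsto (fun p : ℝ × ℝ => deriv f (p.1+p.2)) l (nhds 1) := by
    apply tendsto_of_abs_le (h := fun p : ℝ × ℝ => (1/(p.2-1/2))^2) _ hz2sq
    filter_upwards [hev0, hev2] with p hx h2
    have hd := deriv_f_bounds (show 3/2 ≤ p.1+p.2 by linarith)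
    have hmon : (1/(p.1+p.2-1/2))^2 ≤ (1/(p.2-1/2))^2 := by
      have ha : 1/(p.1+p.2-1/2) ≤ 1/(p.2-1/2) :=
        one_div_le_one_div_of_le (by linarith) (by linarith)
      have hb : 0 < 1/(p.1+p.2-1/2) := div_pos one_pos (by linarith)
      nlinarith
    linarith [hd]
  -- combine
  have hNX : Filter.Tendsto (fun p : ℝ × ℝ =>
      deriv f p.1 / p.1 * (deriv f p.2 * ((f (p.1+p.2) - f p.2)/p.1)
        + f p.2 * (deriv f p.2 - deriv f (p.1+p.2)) / p.1)
      - f p.1 / p.1^2 * deriv f (p.1+p.2) * deriv f p.2)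
      l (nhds (2 * (1 * 1 + 0) - 1 * 1 * 1)) :=
    (hR.mul ((hBy.mul hW).add hV)).sub ((hQ.mul hBxy).mul hBy)
  have hDX : Filter.Tendsto (fun p : ℝ × ℝ =>
      (f (p.1+p.2) - f p.2)/p.1 - f p.1 / p.1^2 * p.1) l (nhds (1 - 1 * 0)) :=
    hW.sub (hQ.mul hx0)
  have hdiv := (hNX.const_mul (-(1/4))).div (hDX.pow 2)
    (by norm_num : ((1:ℝ) - 1 * 0)^2 ≠ 0)
  have hval : (-(1/4) * ((2:ℝ) * (1 * 1 + 0) - 1 * 1 * 1)) / ((1 - 1 * 0)^2 : ℝ) = -(1/4) := by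
    norm_num
  rw [hval] at hdiv
  apply hdiv.congr'
  filter_upwards [hev0] with p hx
  simp only [Pi.div_apply, K]
  have hxne : p.1 ≠ 0 := ne_of_gt hx
  have e1 : (f (p.1+p.2) - f p.2)/p.1 - f p.1 / p.1^2 * p.1
      = (f (p.1+p.2) - f p.1 - f p.2)/p.1 := by
    field_simp
    ring
  have e2 : -(1/4) * (deriv f p.1 / p.1 * (deriv f p.2 * ((f (p.1+p.2) - f p.2)/p.1)
        + f p.2 * (deriv f p.2 - deriv f (p.1+p.2)) / p.1)
      - f p.1 / p.1^2 * deriv f (p.1+p.2) * deriv f p.2)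
      = (-(1/4) * (f (p.1+p.2) * deriv f p.1 * deriv f p.2
          - f p.1 * deriv f (p.1+p.2) * deriv f p.2
          - f p.2 * deriv f (p.1+p.2) * deriv f p.1)) / p.1^2 := by
    field_simp
    ring
  rw [e1, e2, div_sq_cancel' _ _ _ hxne]

theorem curvature_corner_limits :
    Filter.Tendsto (fun p : ℝ × ℝ => K p.1 p.2)
      (Filter.atTop ×ˢ Filter.atTop) (nhds (-(1 / 2))) ∧
    Filter.Tendsto (fun p : ℝ × ℝ => K p.1 p.2)
      ((nhdsWithin 0 (Set.Ioi 0)) ×ˢ Filter.atTop) (nhds (-(1 / 4))) := by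
  exact ⟨limit1, limit2⟩
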